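/- For the asymptotic canonical moments ⟨n₋^k⟩^C = m^k − (k/V)·(z₀²/(q²+4z₀²))·m^{k−1} + (k(k−1)/(2V))·(z₀²/√(q²+4z₀²))·m^{k−2}, where m = (√(q²+4z₀²) − q)/2, the semi-intensive quantity S_k = (⟨N^k⟩ − ⟨N⟩^k)/⟨N⟩^{k−1} (with ⟨N^k⟩ = V^k⟨n^k⟩) converges as V → ∞ to (k(k−1)/4)·(√(q²+4z₀²) + q)/√(q²+4z₀²). -/

import Mathlib

open Filter Real Topology

/-- Canonical ensemble: with `s = √(q²+4z₀²)`, `m = (s-q)/2`, asymptotic moments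
`⟨n₋^k⟩^C(V) = m^k - (k/V)(z₀²/s²) m^(k-1) + (k(k-1)/(2V))(z₀²/s) m^(k-2)`, and
`⟨N₋⟩ = V·⟨n₋⟩` given by the `k = 1` case, the semi-intensive quantity
`S_k = (⟨N^k⟩ - ⟨N⟩^k)/⟨N⟩^(k-1)` converges as `V → ∞` to
`(k(k-1)/4)·(s+q)/s`. -/
theorem stmt_11 (q z₀ : ℝ) (hz : 0 < z₀) (k : ℕ) (hk : 2 ≤ k)
    (s m : ℝ) (hs : s = Real.sqrt (q ^ 2 + 4 * z₀ ^ 2)) (hm : m = (s - q) / 2)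
    (nmom : ℕ → ℝ → ℝ)
    (hnmom : ∀ (j : ℕ) (V : ℝ), nmom j V =
      m ^ j - ((j : ℝ) / V) * (z₀ ^ 2 / s ^ 2) * m ^ (j - 1) +
        ((j : ℝ) * ((j : ℝ) - 1) / (2 * V)) * (z₀ ^ 2 / s) * m ^ (j - 2)) :
    Tendsto
      (fun V : ℝ =>
        (V ^ k * nmom k V - (V * nmom 1 V) ^ k) / (V * nmom 1 V) ^ (k - 1))
      atTop (nhds ((k : ℝ) * ((k : ℝ) - 1) / 4 * ((s + q) / s))) := by
  obtain ⟨i, rfl⟩ : ∃ i, k = i + 2 := ⟨k - 2, by omega⟩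
  have hq2 : (0:ℝ) < q ^ 2 + 4 * z₀ ^ 2 := by positivity
  have hs0 : 0 < s := hs ▸ Real.sqrt_pos.mpr hq2
  have hsq : s ^ 2 = q ^ 2 + 4 * z₀ ^ 2 := by rw [hs]; exact Real.sq_sqrt hq2.le
  have hqs : q < s := by nlinarith [sq_nonneg (s + q)]
  have hm0 : 0 < m := by rw [hm]; linarith
  set c : ℝ := z₀ ^ 2 / s ^ 2 with hc
  set d : ℝ := z₀ ^ 2 / s with hd
  set F : ℝ → ℝ := fun x =>
    ((m ^ (i+2) - (m - c * x) ^ (i+2)) / x - ((i:ℝ)+2) * c * m ^ (i+1)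
      + (((i:ℝ)+2) * (((i:ℝ)+2) - 1) / 2) * d * m ^ i) / (m - c * x) ^ (i+1) with hFdef
  have hφ : HasDerivAt (fun x : ℝ => (m - c * x) ^ (i+2))
      (-(((i:ℝ)+2) * c * m ^ (i+1))) 0 := by
    have h := ((hasDerivAt_const (0:ℝ) m).sub ((hasDerivAt_id (0:ℝ)).const_mul c)).pow (i+2)
    refine HasDerivAt.congr_deriv (f := fun x : ℝ => (m - c * x) ^ (i+2)) h ?_
    push_cast
    simp
    ring
  have hnum : Tendsto (fun x : ℝ => (m ^ (i+2) - (m - c * x) ^ (i+2)) / x)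
      (𝓝[≠] (0:ℝ)) (𝓝 (((i:ℝ)+2) * c * m ^ (i+1))) := by
    have h1 := (hasDerivAt_iff_tendsto_slope.mp hφ).neg
    rw [neg_neg] at h1
    refine h1.congr fun x => ?_
    rw [slope_def_field]
    simp only [mul_zero, sub_zero, zero_sub, div_neg, neg_neg, neg_sub]
    ring
  have hden : Tendsto (fun x : ℝ => (m - c * x) ^ (i+1)) (𝓝[≠] (0:ℝ)) (𝓝 (m ^ (i+1))) := by
    have hcont : Continuous fun x : ℝ => (m - c * x) ^ (i+1) := by continuity
    simpa using (hcont.tendsto 0).mono_left nhdsWithin_le_nhds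
  have hFt : Tendsto F (𝓝[≠] (0:ℝ))
      (𝓝 ((((i:ℝ)+2) * c * m ^ (i+1) - ((i:ℝ)+2) * c * m ^ (i+1)
        + (((i:ℝ)+2) * (((i:ℝ)+2) - 1) / 2) * d * m ^ i) / m ^ (i+1))) :=
    ((hnum.sub_const _).add_const _).div hden (pow_ne_zero _ hm0.ne')
  have hval : (((i:ℝ)+2) * c * m ^ (i+1) - ((i:ℝ)+2) * c * m ^ (i+1)
        + (((i:ℝ)+2) * (((i:ℝ)+2) - 1) / 2) * d * m ^ i) / m ^ (i+1)
      = ((i+2 : ℕ) : ℝ) * (((i+2 : ℕ) : ℝ) - 1) / 4 * ((s + q) / s) := by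
    have key : z₀ ^ 2 * 2 = m * (s + q) := by
      rw [hm]; linear_combination (-1/2 : ℝ) * hsq
    have hmi : m ^ i ≠ 0 := pow_ne_zero _ hm0.ne'
    rw [sub_self, zero_add, pow_succ, hd]
    push_cast
    field_simp
    ring_nf
    linear_combination (2 * ((i:ℝ) + 1)) * key
  rw [hval] at hFt
  have hinv : Tendsto (fun V : ℝ => V⁻¹) atTop (𝓝[≠] (0:ℝ)) :=
    tendsto_inv_atTop_nhdsGT_zero.mono_right (nhdsWithin_mono _ fun x hx => ne_of_gt hx)
  refine (hFt.comp hinv).congr' ?_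
  filter_upwards [eventually_gt_atTop (max 0 (c / m))] with V hV
  have hV0 : 0 < V := lt_of_le_of_lt (le_max_left _ _) hV
  have hVne : V ≠ 0 := hV0.ne'
  have hcm : c < V * m := by
    have := lt_of_le_of_lt (le_max_right 0 (c / m)) hV
    rwa [div_lt_iff₀ hm0] at this
  have hA0 : 0 < m - c * V⁻¹ := by
    have hrw : m - c * V⁻¹ = (V * m - c) / V := by field_simp
    rw [hrw]
    exact div_pos (by linarith) hV0
  have hAne : (m - c * V⁻¹) ≠ 0 := hA0.ne'
  have hn1 : V * nmom 1 V = V * (m - c * V⁻¹) := by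
    rw [hnmom]
    push_cast
    field_simp
    ring
  show F V⁻¹ = _
  rw [hn1, hnmom, hFdef]
  simp only
  rw [mul_pow, mul_pow]
  push_cast
  rw [div_eq_div_iff (pow_ne_zero _ hAne)
    (mul_ne_zero (pow_ne_zero _ hVne) (pow_ne_zero _ hAne))]
  field_simp
  ring
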